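/- arXiv:1202.1815 — 2 statements merged into one kernel-verified Lean document; each statement's English description precedes it below -/
import Mathlib

section
/- If λ ⊆ V₁ ⊕ V₂ is a Lagrangian subspace of the direct sum of symplectic vector spaces (V₁, ω₁) and (V₂, ω₂) such that λ ∩ V₁ is Lagrangian in V₁, then λ decomposes as λ = (λ ∩ V₁) ⊕ (λ ∩ V₂); that is, λ is spanned by its intersections with the two factors. -/
open LinearMap (BilinForm)

/-- The direct sum of two bilinear forms, on the product space. -/
def directSumForm {K V₁ V₂ : Type} [Field K] [AddCommGroup V₁] [Module K V₁]
    [AddCommGroup V₂] [Module K V₂] (ω₁ : BilinForm K V₁) (ω₂ : BilinForm K V₂) :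
    BilinForm K (V₁ × V₂) :=
  ω₁.comp (LinearMap.fst K V₁ V₂) (LinearMap.fst K V₁ V₂) +
    ω₂.comp (LinearMap.snd K V₁ V₂) (LinearMap.snd K V₁ V₂)

/-- A Lagrangian subspace: one equal to its own orthogonal complement. -/
def IsLagrangian {K V : Type} [Field K] [AddCommGroup V] [Module K V]
    (B : BilinForm K V) (L : Submodule K V) : Prop :=
  L = B.orthogonal L

theorem lagrangian_decomposes {K V₁ V₂ : Type} [Field K]
    [AddCommGroup V₁] [Module K V₁] [AddCommGroup V₂] [Module K V₂]
    [FiniteDimensional K V₁] [FiniteDimensional K V₂]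
    (ω₁ : BilinForm K V₁) (ω₂ : BilinForm K V₂)
    (h₁alt : ω₁.IsAlt) (h₁nd : ω₁.Nondegenerate)
    (h₂alt : ω₂.IsAlt) (h₂nd : ω₂.Nondegenerate)
    (L : Submodule K (V₁ × V₂))
    (hL : IsLagrangian (directSumForm ω₁ ω₂) L)
    (hL1 : IsLagrangian ω₁ ((L ⊓ Submodule.fst K V₁ V₂).map (LinearMap.fst K V₁ V₂))) :
    L = (L ⊓ Submodule.fst K V₁ V₂) ⊔ (L ⊓ Submodule.snd K V₁ V₂) := by
  apply le_antisymm
  · rintro ⟨x, y⟩ hxy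
    have horth : ∀ z ∈ L, directSumForm ω₁ ω₂ z (x, y) = 0 := by
      have := hxy
      rw [hL, LinearMap.BilinForm.mem_orthogonal_iff] at this
      exact this
    have hx : x ∈ (L ⊓ Submodule.fst K V₁ V₂).map (LinearMap.fst K V₁ V₂) := by
      rw [hL1, LinearMap.BilinForm.mem_orthogonal_iff]
      rintro u hu
      obtain ⟨⟨u1, u2⟩, ⟨huL, hu2⟩, rfl⟩ := hu
      have hu2' : u2 = 0 := hu2
      have := horth _ huL
      simp only [directSumForm, LinearMap.add_apply, LinearMap.compl₁₂_apply,
        LinearMap.comp_apply, LinearMap.BilinForm.comp_apply, LinearMap.fst_apply,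
        LinearMap.snd_apply, hu2', map_zero, LinearMap.zero_apply, add_zero] at this
      simpa [LinearMap.BilinForm.IsOrtho, LinearMap.isOrtho_def] using this
    obtain ⟨⟨x', z⟩, ⟨hxL, hz⟩, hx'⟩ := hx
    have hz0 : z = 0 := hz
    subst hz0
    simp only [LinearMap.fst_apply] at hx'
    subst hx'
    have h1 : ((x', 0) : V₁ × V₂) ∈ L ⊓ Submodule.fst K V₁ V₂ := ⟨hxL, rfl⟩
    have h2 : ((0, y) : V₁ × V₂) ∈ L ⊓ Submodule.snd K V₁ V₂ := by
      refine ⟨?_, rfl⟩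
      have := L.sub_mem hxy hxL
      simpa using this
    have : ((x', y) : V₁ × V₂) = (x', 0) + (0, y) := by simp
    rw [this]
    exact Submodule.add_mem _ (Submodule.mem_sup_left h1) (Submodule.mem_sup_right h2)
  · exact sup_le inf_le_left inf_le_left
end

section
/- If two endomorphisms X and Y of finitely generated free modules over a commutative ring are strong shift equivalent, then Trace(Xⁿ) = Trace(Yⁿ) for every positive integer n. -/
/-- Elementary strong shift equivalence of square matrices over a commutative ring. -/
def ElemSSE {R : Type} [CommRing R] {n m : ℕ}
    (X : Matrix (Fin n) (Fin n) R) (Y : Matrix (Fin m) (Fin m) R) : Prop :=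
  ∃ (S : Matrix (Fin n) (Fin m) R) (T : Matrix (Fin m) (Fin n) R), X = S * T ∧ Y = T * S

/-- Strong shift equivalence: a finite chain of elementary strong shift equivalences. -/
def SSE {R : Type} [CommRing R] :
    (Σ n : ℕ, Matrix (Fin n) (Fin n) R) → (Σ n : ℕ, Matrix (Fin n) (Fin n) R) → Prop :=
  Relation.ReflTransGen (fun A B => ElemSSE A.2 B.2)

lemma pow_mul_eq {R : Type} [CommRing R] {n m : ℕ}
    (S : Matrix (Fin n) (Fin m) R) (T : Matrix (Fin m) (Fin n) R) (k : ℕ) :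
    (S * T) ^ (k + 1) = S * ((T * S) ^ k * T) := by
  induction k with
  | zero => simp [pow_succ]
  | succ k ih =>
    rw [pow_succ, ih, pow_succ]
    simp only [Matrix.mul_assoc]

lemma elem_trace {R : Type} [CommRing R] {n m : ℕ}
    {X : Matrix (Fin n) (Fin n) R} {Y : Matrix (Fin m) (Fin m) R}
    (h : ElemSSE X Y) (k : ℕ) (hk : 0 < k) : (X ^ k).trace = (Y ^ k).trace := by
  obtain ⟨S, T, rfl, rfl⟩ := h
  obtain ⟨j, rfl⟩ := Nat.exists_eq_add_of_lt hk
  rw [zero_add, pow_mul_eq, Matrix.trace_mul_comm]; simp [pow_succ, Matrix.mul_assoc]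

lemma SSE_trace_aux {R : Type} [CommRing R]
    (A B : Σ n : ℕ, Matrix (Fin n) (Fin n) R) (h : SSE A B) :
    ∀ k : ℕ, 0 < k → (A.2 ^ k).trace = (B.2 ^ k).trace := by
  induction h with
  | refl => intro k hk; rfl
  | tail _ hbc ih => intro k hk; rw [ih k hk, elem_trace hbc k hk]

theorem SSE_trace_pow_eq {R : Type} [CommRing R] {n m : ℕ}
    (X : Matrix (Fin n) (Fin n) R) (Y : Matrix (Fin m) (Fin m) R)
    (h : SSE ⟨n, X⟩ ⟨m, Y⟩) : ∀ k : ℕ, 0 < k → (X ^ k).trace = (Y ^ k).trace := by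
  exact SSE_trace_aux ⟨n, X⟩ ⟨m, Y⟩ h
end
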